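/- Let ω = 2g_{ij} δy^j ∧ dx^i be the almost symplectic 2-form of the evolution nonlinear connection with δy^j = dy^j + N^j_k dx^k, N^i_j = N₀^i_j − (1/4)∂V^i/∂y^j, and let ω_L = 2g_{ij} δ₀y^j ∧ dx^i with δ₀y^j = dy^j + N₀^j_k dx^k be the Cartan symplectic form. Then ω_L = ω + (1/2)F_{ij} dx^j ∧ dx^i, where F_{ij} = (1/2)(∂σ_i/∂y^j − ∂σ_j/∂y^i) is the helicoidal tensor and σ_i = g_{ik}V^k. Consequently, the evolution nonlinear connection is compatible with the symplectic structure (ω_L(hX,hY) = 0 for all X,Y) if and only if ∂σ_i/∂y^j is symmetric in i,j. -/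

import Mathlib

/-- The phase space `TM` in local coordinates: points `(x, y)`. -/
abbrev TP (n : ℕ) := (Fin n → ℝ) × (Fin n → ℝ)

/-- Partial derivative with respect to the fibre coordinate `y^i`. -/
noncomputable def pdy {n : ℕ} (i : Fin n) (f : TP n → ℝ) : TP n → ℝ :=
  fun p => fderiv ℝ f p (0, Pi.single i 1)

/-- The 2-form `2 g_{ij} δy^j ∧ dx^i` adapted to a nonlinear connection `N`. -/
noncomputable def adaptedForm {n : ℕ} (g : TP n → Fin n → Fin n → ℝ)
    (N : TP n → Fin n → Fin n → ℝ) (p w₁ w₂ : TP n) : ℝ :=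
  ∑ i, ∑ j, 2 * g p i j *
    ((w₁.2 j + ∑ k, N p j k * w₁.1 k) * w₂.1 i -
     (w₂.2 j + ∑ k, N p j k * w₂.1 k) * w₁.1 i)

/-- Horizontal lift of the vector `u` with respect to the connection `N` at `p`. -/
noncomputable def hLift {n : ℕ} (N : TP n → Fin n → Fin n → ℝ)
    (p : TP n) (u : Fin n → ℝ) : TP n :=
  (u, fun j => -∑ i, N p j i * u i)

/- ## Auxiliary lemmas -/

lemma pdy_sum_mul {n : ℕ} (g : TP n → Fin n → Fin n → ℝ) (V : TP n → Fin n → ℝ)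
    (hg : ∀ i j, ContDiff ℝ (⊤ : ℕ∞) (fun p => g p i j))
    (hV : ∀ i, ContDiff ℝ (⊤ : ℕ∞) (fun p => V p i))
    (p : TP n) (i j : Fin n) :
    pdy j (fun q => ∑ k, g q i k * V q k) p
      = ∑ k, (pdy j (fun q => g q i k) p * V p k + g p i k * pdy j (fun q => V q k) p) := by
  have hgd : ∀ k, DifferentiableAt ℝ (fun q => g q i k) p :=
    fun k => ((hg i k).differentiable (by norm_num)).differentiableAt
  have hVd : ∀ k, DifferentiableAt ℝ (fun q => V q k) p :=
    fun k => ((hV k).differentiable (by norm_num)).differentiableAt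
  unfold pdy
  rw [fderiv_fun_sum (A := fun k q => g q i k * V q k) (fun k _ => ((hgd k).mul (hVd k))), ContinuousLinearMap.sum_apply]
  refine Finset.sum_congr rfl fun k _ => ?_
  rw [fderiv_fun_mul (hgd k) (hVd k)]
  simp only [ContinuousLinearMap.add_apply, ContinuousLinearMap.smul_apply, smul_eq_mul]
  ring

lemma main_alg {n : ℕ} (G A : Fin n → Fin n → ℝ) (x₁ x₂ : Fin n → ℝ) :
    (∑ i, ∑ j, (2 * G i j) *
      (((1/4) * ∑ k, A j k * x₁ k) * x₂ i - ((1/4) * ∑ k, A j k * x₂ k) * x₁ i))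
    = (1/2) * ∑ i, ∑ j, (∑ k, G i k * A k j) * (x₁ j * x₂ i - x₂ j * x₁ i) := by
  rw [Finset.mul_sum]
  refine Finset.sum_congr rfl fun i _ => ?_
  rw [Finset.mul_sum]
  have h1 : ∑ j, (1/2) * ((∑ k, G i k * A k j) * (x₁ j * x₂ i - x₂ j * x₁ i))
      = ∑ j, ∑ k, (1/2) * (G i k * A k j) * (x₁ j * x₂ i - x₂ j * x₁ i) := by
    refine Finset.sum_congr rfl fun j _ => ?_
    rw [Finset.sum_mul, Finset.mul_sum]
    exact Finset.sum_congr rfl fun k _ => by ring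
  rw [h1, Finset.sum_comm]
  refine Finset.sum_congr rfl fun j _ => ?_
  have h2 : (2 * G i j) * (((1/4) * ∑ k, A j k * x₁ k) * x₂ i - ((1/4) * ∑ k, A j k * x₂ k) * x₁ i)
      = (1/2) * G i j * ((∑ k, A j k * x₁ k) * x₂ i - (∑ k, A j k * x₂ k) * x₁ i) := by ring
  rw [h2, Finset.sum_mul, Finset.sum_mul, ← Finset.sum_sub_distrib, Finset.mul_sum]
  exact Finset.sum_congr rfl fun k _ => by ring

lemma half_anti {n : ℕ} (B W : Fin n → Fin n → ℝ) (hW : ∀ i j, W j i = - W i j) :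
    ∑ i, ∑ j, ((1/2) * (B i j - B j i)) * W i j = ∑ i, ∑ j, B i j * W i j := by
  have h1 : (∑ i, ∑ j, B j i * W i j) = - ∑ i, ∑ j, B i j * W i j := by
    rw [Finset.sum_comm, ← Finset.sum_neg_distrib]
    refine Finset.sum_congr rfl fun i _ => ?_
    rw [← Finset.sum_neg_distrib]
    exact Finset.sum_congr rfl fun j _ => by rw [hW i j]; ring
  have h2 : (∑ i, ∑ j, ((1/2) * (B i j - B j i)) * W i j)
      = (1/2) * (∑ i, ∑ j, B i j * W i j) - (1/2) * (∑ i, ∑ j, B j i * W i j) := by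
    rw [Finset.mul_sum, Finset.mul_sum, ← Finset.sum_sub_distrib]
    refine Finset.sum_congr rfl fun i _ => ?_
    rw [Finset.mul_sum, Finset.mul_sum, ← Finset.sum_sub_distrib]
    exact Finset.sum_congr rfl fun j _ => by ring
  rw [h2, h1]; ring

lemma form_diff {n : ℕ} (g N₀ A : TP n → Fin n → Fin n → ℝ) (p w₁ w₂ : TP n) :
    adaptedForm g N₀ p w₁ w₂
      - adaptedForm g (fun p i j => N₀ p i j - (1/4) * A p i j) p w₁ w₂
    = ∑ i, ∑ j, (2 * g p i j) *
        (((1/4) * ∑ k, A p j k * w₁.1 k) * w₂.1 i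
          - ((1/4) * ∑ k, A p j k * w₂.1 k) * w₁.1 i) := by
  unfold adaptedForm
  rw [← Finset.sum_sub_distrib]
  refine Finset.sum_congr rfl fun i _ => ?_
  rw [← Finset.sum_sub_distrib]
  refine Finset.sum_congr rfl fun j _ => ?_
  have hx : ∀ x : Fin n → ℝ, ∑ k, (N₀ p j k - 1/4 * A p j k) * x k
      = (∑ k, N₀ p j k * x k) - (1/4) * ∑ k, A p j k * x k := by
    intro x
    rw [Finset.mul_sum, ← Finset.sum_sub_distrib]
    exact Finset.sum_congr rfl fun k _ => by ring
  rw [hx, hx]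
  ring

lemma lift_val {n : ℕ} (g N₀ A : TP n → Fin n → Fin n → ℝ) (p : TP n) (u v : Fin n → ℝ) :
    adaptedForm g N₀ p
        (hLift (fun p i j => N₀ p i j - (1/4) * A p i j) p u)
        (hLift (fun p i j => N₀ p i j - (1/4) * A p i j) p v)
    = ∑ i, ∑ j, (2 * g p i j) *
        (((1/4) * ∑ k, A p j k * u k) * v i - ((1/4) * ∑ k, A p j k * v k) * u i) := by
  unfold adaptedForm hLift
  refine Finset.sum_congr rfl fun i _ => ?_
  refine Finset.sum_congr rfl fun j _ => ?_
  have hx : ∀ x : Fin n → ℝ, ∑ k, (N₀ p j k - 1/4 * A p j k) * x k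
      = (∑ k, N₀ p j k * x k) - (1/4) * ∑ k, A p j k * x k := by
    intro x
    rw [Finset.mul_sum, ← Finset.sum_sub_distrib]
    exact Finset.sum_congr rfl fun k _ => by ring
  simp only
  rw [hx, hx]
  ring

lemma double_single {n : ℕ} (B : Fin n → Fin n → ℝ) (i j : Fin n) :
    ∑ i', ∑ j', B i' j' *
      ((Pi.single j 1 : Fin n → ℝ) j' * (Pi.single i 1 : Fin n → ℝ) i'
        - (Pi.single i 1 : Fin n → ℝ) j' * (Pi.single j 1 : Fin n → ℝ) i')
    = B i j - B j i := by
  simp [Pi.single_apply, mul_sub, Finset.sum_sub_distrib, mul_ite, ite_mul,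
    Finset.sum_ite_eq', eq_comm]

/-- with evolution connection `N = N₀ − (1/4)∂V/∂y` and helicoidal
tensor `F_{ij} = (1/2)(∂σ_i/∂y^j − ∂σ_j/∂y^i)`, one has
`ω_L = ω + (1/2)F_{ij} dx^j ∧ dx^i`; consequently the evolution connection is
compatible with the symplectic structure iff `∂σ_i/∂y^j` is symmetric in `i,j`. -/
theorem stmt7 {n : ℕ} (g : TP n → Fin n → Fin n → ℝ)
    (N₀ : TP n → Fin n → Fin n → ℝ) (V : TP n → Fin n → ℝ)
    (hg : ∀ i j, ContDiff ℝ (⊤ : ℕ∞) (fun p => g p i j))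
    (hV : ∀ i, ContDiff ℝ (⊤ : ℕ∞) (fun p => V p i))
    (hgsym : ∀ p i j, g p i j = g p j i)
    (hCartan : ∀ (p : TP n) (i j k : Fin n),
      pdy k (fun q => g q i j) p = pdy j (fun q => g q i k) p) :
    (∀ (p w₁ w₂ : TP n),
      adaptedForm g N₀ p w₁ w₂ =
        adaptedForm g (fun p i j => N₀ p i j - (1/4) * pdy j (fun q => V q i) p) p w₁ w₂
        + (1/2) * ∑ i, ∑ j,
            ((1/2) * (pdy j (fun q => ∑ k, g q i k * V q k) p
                    - pdy i (fun q => ∑ k, g q j k * V q k) p)) *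
            (w₁.1 j * w₂.1 i - w₂.1 j * w₁.1 i)) ∧
    ((∀ (p : TP n) (u v : Fin n → ℝ),
        adaptedForm g N₀ p
          (hLift (fun p i j => N₀ p i j - (1/4) * pdy j (fun q => V q i) p) p u)
          (hLift (fun p i j => N₀ p i j - (1/4) * pdy j (fun q => V q i) p) p v) = 0) ↔
      (∀ (p : TP n) (i j : Fin n),
        pdy j (fun q => ∑ k, g q i k * V q k) p
          = pdy i (fun q => ∑ k, g q j k * V q k) p)) := by
  -- the matrix B_{ij} = ∑_k g_{ik} ∂V^k/∂y^j
  set B : TP n → Fin n → Fin n → ℝ :=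
    fun p i j => ∑ k, g p i k * pdy j (fun q => V q k) p with hB
  -- symmetry of the Cartan tensor in the form we need
  have hC : ∀ (p : TP n) (i j k : Fin n),
      pdy j (fun q => g q i k) p = pdy i (fun q => g q j k) p := by
    intro p i j k
    rw [hCartan p i k j, hCartan p j k i]
    congr 1
    funext q
    exact hgsym q i j
  -- skew part of ∂σ equals skew part of B
  have hF : ∀ (p : TP n) (i j : Fin n),
      pdy j (fun q => ∑ k, g q i k * V q k) p - pdy i (fun q => ∑ k, g q j k * V q k) p
        = B p i j - B p j i := by
    intro p i j
    rw [pdy_sum_mul g V hg hV p i j, pdy_sum_mul g V hg hV p j i, hB]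
    simp only
    rw [← Finset.sum_sub_distrib, ← Finset.sum_sub_distrib]
    refine Finset.sum_congr rfl fun k _ => ?_
    rw [hC p i j k]
    ring
  constructor
  · -- part 1
    intro p w₁ w₂
    have hdiff := form_diff g N₀ (fun p i j => pdy j (fun q => V q i) p) p w₁ w₂
    have hmain := main_alg (g p) (fun j k => pdy k (fun q => V q j) p) w₁.1 w₂.1
    simp only [hF]
    rw [half_anti (B p) (fun i j => w₁.1 j * w₂.1 i - w₂.1 j * w₁.1 i)
      (fun i j => by ring)]
    simp only [hB] at *
    linarith [hdiff, hmain]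
  · constructor
    · -- compatibility → symmetry
      intro h p i j
      have hv := h p (Pi.single j 1) (Pi.single i 1)
      rw [lift_val g N₀ (fun p i j => pdy j (fun q => V q i) p) p
        (Pi.single j 1) (Pi.single i 1)] at hv
      rw [main_alg (g p) (fun j k => pdy k (fun q => V q j) p)
        (Pi.single j 1) (Pi.single i 1)] at hv
      have hds := double_single (B p) i j
      simp only [hB] at hds
      rw [hds] at hv
      have : B p i j - B p j i = 0 := by
        simp only [hB]
        linarith [hv]
      have := hF p i j
      linarith [hF p i j, this]
    · -- symmetry → compatibility
      intro h p u v
      rw [lift_val g N₀ (fun p i j => pdy j (fun q => V q i) p) p u v,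
        main_alg (g p) (fun j k => pdy k (fun q => V q j) p) u v]
      have hzero : ∀ i j, (∑ k, g p i k * pdy j (fun q => V q k) p)
          = (∑ k, g p j k * pdy i (fun q => V q k) p) := by
        intro i j
        have := hF p i j
        rw [h p i j] at this
        simp only [hB] at this
        linarith [this]
      have : (∑ i, ∑ j, (∑ k, g p i k * pdy j (fun q => V q k) p) *
          (u j * v i - v j * u i)) = 0 := by
        rw [← half_anti (B p) (fun i j => u j * v i - v j * u i) (fun i j => by ring)]
        · refine Finset.sum_eq_zero fun i _ => Finset.sum_eq_zero fun j _ => ?_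
          simp only [hB]
          rw [sub_eq_zero.mpr (hzero i j)]
          ring
      rw [this]
      ring
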